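/- Let k ≥ 2 and let (α, κ) be an idempotent state system on A_k satisfying Σ_{i,j∈ℤ_k} α_{i,j} = Σ_{r∈ℤ_k} κ_{r,r} = 1/2. Let q := min{ j ∈ {1,…,k} : α_{i, j mod k} ≠ 0 for some i ∈ ℤ_k }. Then q divides k and there exists l ∈ {0,…,q−1} such that κ_{r,r} = q/(2k) if r ≡ l (mod q) and κ_{r,r} = 0 otherwise; moreover κ_{r,s} = 0 whenever r ≢ l (mod q) or s ≢ l (mod q). -/

import Mathlib

/-! Statement 9: for an idempotent state system with `Σα = Tr K = 1/2`, with
`q` the minimal second coordinate in the support of `α`, one has `q | k` and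
there is `l ∈ {0,…,q−1}` with `κ_{r,r} = q/(2k)` for `r ≡ l (mod q)`,
`κ_{r,r} = 0` otherwise, and `κ_{r,s} = 0` unless `r ≡ s ≡ l (mod q)`. -/

open Finset
open scoped ComplexOrder

noncomputable section

/-- `η^t` for `t ∈ ℤ_k`, where `η = exp(2πi/k)`. -/
def etac (k : ℕ) [NeZero k] (t : ZMod k) : ℂ :=
  Complex.exp (2 * (Real.pi : ℂ) * Complex.I * (t.val : ℂ) / (k : ℂ))

/-- An *idempotent state system* on the Sekine quantum group `A_k`: the
coefficients `α_{i,j}` are nonnegative reals (expressed via the order on `ℂ`),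
the matrix `K = [κ_{r,s}]` is positive semidefinite, and the equations (A),
(B), (C) hold. -/
def IdemSystem (k : ℕ) [NeZero k] (α κ : ZMod k → ZMod k → ℂ) : Prop :=
  (∀ i j : ZMod k, 0 ≤ α i j) ∧
  (Matrix.of κ).PosSemidef ∧
  (∀ i j : ZMod k, α i j =
      (∑ r : ZMod k, ∑ s : ZMod k, α (i - r) (j - s) * α r s)
        + (1 / (k : ℂ)) * ∑ r : ZMod k, ∑ s : ZMod k,
            etac k (i * (r - s)) * (κ r s * κ (r + j) (s + j))) ∧
  (∀ r s : ZMod k, κ r s =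
      ∑ i : ZMod k, ∑ j : ZMod k,
        etac k (i * (s - r)) * α i j * (κ (r + j) (s + j) + κ (r - j) (s - j))) ∧
  ((∑ i : ZMod k, ∑ j : ZMod k, α i j) + ∑ r : ZMod k, κ r r = 1)

/-- `j ∈ qℤ_k`, i.e. `j` is a multiple of `q` in `ℤ_k`. -/
abbrev InQ (k q : ℕ) (j : ZMod k) : Prop := ∃ t : ZMod k, j = (q : ZMod k) * t

lemma etac_pow (k : ℕ) [NeZero k] (x : ZMod k) :
    etac k x = Complex.exp (2 * (Real.pi:ℂ) * Complex.I / k) ^ x.val := by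
  rw [etac, ← Complex.exp_nat_mul]; congr 1; ring

lemma etac_zero (k : ℕ) [NeZero k] : etac k 0 = 1 := by simp [etac]

lemma sum_etac (k : ℕ) [NeZero k] (t : ZMod k) :
    ∑ i : ZMod k, etac k (i * t) = if t = 0 then (k : ℂ) else 0 := by
  have hk0 : k ≠ 0 := NeZero.ne k
  set ζ := Complex.exp (2 * (Real.pi:ℂ) * Complex.I / k) with hζdef
  have hζ : IsPrimitiveRoot ζ k := Complex.isPrimitiveRoot_exp k hk0
  have hζk : ζ ^ k = 1 := hζ.pow_eq_one
  have hmod : ∀ n : ℕ, ζ ^ (n % k) = ζ ^ n := by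
    intro n
    conv_rhs => rw [← Nat.mod_add_div n k]
    rw [pow_add, pow_mul, hζk, one_pow, mul_one]
  have key : ∀ i : ZMod k, etac k (i * t) = (ζ ^ t.val) ^ i.val := by
    intro i
    rw [etac_pow, ZMod.val_mul, hmod, mul_comm, pow_mul]
  rw [Finset.sum_congr rfl (fun i _ => key i)]
  have hrange : ∑ i : ZMod k, (ζ ^ t.val) ^ i.val = ∑ n ∈ Finset.range k, (ζ ^ t.val) ^ n := by
    refine Finset.sum_nbij' (fun (i : ZMod k) => i.val) (fun n => (n : ZMod k)) ?_ ?_ ?_ ?_ ?_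
    · intro a _; exact Finset.mem_range.mpr a.val_lt
    · intro a _; exact Finset.mem_univ _
    · intro a _; simp [ZMod.natCast_val, ZMod.cast_id]
    · intro a ha; exact ZMod.val_cast_of_lt (Finset.mem_range.mp ha)
    · intro a _; rfl
  rw [hrange]
  by_cases ht : t = 0
  · simp [ht]
  · rw [if_neg ht]
    have htv : t.val ≠ 0 := fun h => ht (by
      have := ZMod.natCast_val (n := k) (R := ZMod k) t
      rw [ZMod.cast_id] at this
      rw [← this, h, Nat.cast_zero])
    have hw : ζ ^ t.val ≠ 1 := by
      intro hcon
      exact htv (Nat.eq_zero_of_dvd_of_lt ((hζ.pow_eq_one_iff_dvd t.val).mp hcon) t.val_lt)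
    rw [geom_sum_eq hw]
    have : (ζ ^ t.val) ^ k = 1 := by
      rw [← pow_mul, mul_comm, pow_mul, hζk, one_pow]
    rw [this]
    simp

theorem stmt9 (k : ℕ) [NeZero k] (hk : 2 ≤ k) (α κ : ZMod k → ZMod k → ℂ)
    (h : IdemSystem k α κ)
    (hα : (∑ i : ZMod k, ∑ j : ZMod k, α i j) = 1 / 2)
    (hκ : (∑ r : ZMod k, κ r r) = 1 / 2)
    (q : ℕ)
    (hq : q = sInf {j : ℕ | 1 ≤ j ∧ j ≤ k ∧ ∃ i : ZMod k, α i (j : ZMod k) ≠ 0}) :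
    q ∣ k ∧
    ∃ l : ℕ, l < q ∧
      (∀ r : ZMod k,
        (InQ k q (r - (l : ZMod k)) → κ r r = (q : ℂ) / (2 * (k : ℂ))) ∧
        (¬ InQ k q (r - (l : ZMod k)) → κ r r = 0)) ∧
      (∀ r s : ZMod k,
        (¬ InQ k q (r - (l : ZMod k)) ∨ ¬ InQ k q (s - (l : ZMod k))) → κ r s = 0) := by
  classical
  obtain ⟨hpos, hKpsd, hAeq, hBeq, hCeq⟩ := h
  obtain ⟨B, hBmat⟩ : ∃ B : Matrix (ZMod k) (ZMod k) ℂ, Matrix.of κ = Matrix.conjTranspose B * B := by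
    open scoped MatrixOrder Matrix.Norms.L2Operator in
    obtain ⟨B, hB⟩ := CStarAlgebra.nonneg_iff_eq_star_mul_self.mp hKpsd.nonneg
    exact ⟨B, hB⟩
  have hκB : ∀ r s, κ r s = ∑ t : ZMod k, (starRingEnd ℂ) (B t r) * B t s := by
    intro r s
    have := congrFun (congrFun hBmat r) s
    simpa [Matrix.mul_apply, Matrix.conjTranspose_apply] using this
  set d : ZMod k → ℝ := fun r => ∑ t : ZMod k, Complex.normSq (B t r) with hddef
  have hκd : ∀ r, κ r r = ((d r : ℝ) : ℂ) := by
    intro r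
    rw [hκB r r, hddef]
    push_cast
    exact Finset.sum_congr rfl fun t _ => (Complex.normSq_eq_conj_mul_self).symm ▸ rfl
  have hd0 : ∀ r, 0 ≤ d r := fun r => Finset.sum_nonneg fun t _ => Complex.normSq_nonneg _
  have hκzero : ∀ r, d r = 0 → ∀ s, κ r s = 0 ∧ κ s r = 0 := by
    intro r hdr s
    have hB0 : ∀ t, B t r = 0 := by
      intro t
      have := (Finset.sum_eq_zero_iff_of_nonneg
        (fun t (_ : t ∈ univ) => Complex.normSq_nonneg (B t r))).mp hdr t (mem_univ t)
      exact Complex.normSq_eq_zero.mp this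
    constructor
    · rw [hκB]; apply Finset.sum_eq_zero; intro t _; rw [hB0 t]; simp
    · rw [hκB]; apply Finset.sum_eq_zero; intro t _; rw [hB0 t]; simp
  -- α is real nonneg
  have him : ∀ i j, (α i j).im = 0 := by
    intro i j; have := (Complex.le_def.mp (hpos i j)).2; simpa using this.symm
  have hre : ∀ i j, 0 ≤ (α i j).re := by
    intro i j; have := (Complex.le_def.mp (hpos i j)).1; simpa using this
  have hαre : ∀ i j, α i j = (((α i j).re : ℝ) : ℂ) := by
    intro i j
    apply Complex.ext
    · simp
    · simp [him i j]
  set A : ZMod k → ℝ := fun j => ∑ i : ZMod k, (α i j).re with hAdef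
  have hA0 : ∀ j, 0 ≤ A j := fun j => Finset.sum_nonneg fun i _ => hre i j
  have hAc : ∀ j, (∑ i : ZMod k, α i j) = ((A j : ℝ) : ℂ) := by
    intro j
    rw [hAdef]; push_cast
    exact Finset.sum_congr rfl fun i _ => hαre i j
  have hAsum : ∑ j : ZMod k, A j = 1 / 2 := by
    have h1 : (∑ j : ZMod k, ((A j : ℝ) : ℂ)) = ((1/2 : ℝ) : ℂ) := by
      rw [← Finset.sum_congr rfl fun j _ => hAc j]
      rw [Finset.sum_comm]
      rw [hα]; norm_num
    have h2 : ((∑ j : ZMod k, A j : ℝ) : ℂ) = ((1/2 : ℝ) : ℂ) := by push_cast at h1 ⊢; exact h1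
    exact_mod_cast h2
  have hdsum : ∑ r : ZMod k, d r = 1 / 2 := by
    have h1 : ((∑ r : ZMod k, d r : ℝ) : ℂ) = ((1/2 : ℝ) : ℂ) := by
      calc ((∑ r : ZMod k, d r : ℝ) : ℂ) = ∑ r : ZMod k, ((d r : ℝ) : ℂ) := by push_cast; rfl
        _ = ∑ r : ZMod k, κ r r := Finset.sum_congr rfl fun r _ => (hκd r).symm
        _ = 1 / 2 := hκ
        _ = ((1/2 : ℝ) : ℂ) := by norm_num
    exact_mod_cast h1
  -- equation (A')
  have hA' : ∀ j : ZMod k, A j = (∑ s : ZMod k, A (j - s) * A s) + ∑ r : ZMod k, d r * d (r + j) := by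
    intro j
    have h1 : (∑ i : ZMod k, α i j) =
        (∑ i : ZMod k, ∑ r : ZMod k, ∑ s : ZMod k, α (i - r) (j - s) * α r s)
        + ∑ i : ZMod k, (1 / (k : ℂ)) * ∑ r : ZMod k, ∑ s : ZMod k,
            etac k (i * (r - s)) * (κ r s * κ (r + j) (s + j)) := by
      rw [← Finset.sum_add_distrib]
      exact Finset.sum_congr rfl fun i _ => hAeq i j
    -- first term
    have e1 : ∀ r s : ZMod k, (∑ i : ZMod k, α (i - r) (j - s)) = ((A (j - s) : ℝ) : ℂ) := by
      intro r s
      calc ∑ i : ZMod k, α (i - r) (j - s)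
          = ∑ i : ZMod k, α i (j - s) :=
            Fintype.sum_equiv (Equiv.subRight r) _ _ (fun i => rfl)
        _ = ((A (j - s) : ℝ) : ℂ) := hAc _
    have eT1 : (∑ i : ZMod k, ∑ r : ZMod k, ∑ s : ZMod k, α (i - r) (j - s) * α r s)
        = ∑ s : ZMod k, ((A (j - s) : ℝ) : ℂ) * ((A s : ℝ) : ℂ) := by
      rw [Finset.sum_comm]
      have step1 : ∀ r : ZMod k, (∑ i : ZMod k, ∑ s : ZMod k, α (i - r) (j - s) * α r s)
          = ∑ s : ZMod k, ((A (j - s) : ℝ) : ℂ) * α r s := by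
        intro r
        rw [Finset.sum_comm]
        refine Finset.sum_congr rfl fun s _ => ?_
        rw [← Finset.sum_mul, e1 r s]
      rw [Finset.sum_congr rfl fun r _ => step1 r]
      rw [Finset.sum_comm]
      refine Finset.sum_congr rfl fun s _ => ?_
      rw [← Finset.mul_sum, hAc s]
    -- second term
    have eT2 : (∑ i : ZMod k, (1 / (k : ℂ)) * ∑ r : ZMod k, ∑ s : ZMod k,
            etac k (i * (r - s)) * (κ r s * κ (r + j) (s + j)))
        = ∑ r : ZMod k, ((d r : ℝ) : ℂ) * ((d (r + j) : ℝ) : ℂ) := by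
      rw [← Finset.mul_sum]
      have swap : (∑ i : ZMod k, ∑ r : ZMod k, ∑ s : ZMod k,
            etac k (i * (r - s)) * (κ r s * κ (r + j) (s + j)))
          = ∑ r : ZMod k, ∑ s : ZMod k, (∑ i : ZMod k, etac k (i * (r - s))) * (κ r s * κ (r + j) (s + j)) := by
        rw [Finset.sum_comm]
        refine Finset.sum_congr rfl fun r _ => ?_
        rw [Finset.sum_comm]
        refine Finset.sum_congr rfl fun s _ => ?_
        rw [Finset.sum_mul]
      rw [swap]
      have inner : ∀ r : ZMod k, (∑ s : ZMod k, (∑ i : ZMod k, etac k (i * (r - s))) * (κ r s * κ (r + j) (s + j)))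
          = (k : ℂ) * (κ r r * κ (r + j) (r + j)) := by
        intro r
        rw [Finset.sum_eq_single r]
        · rw [sum_etac, if_pos (sub_self r)]
        · intro s _ hs
          rw [sum_etac, if_neg (fun hc => hs (by linear_combination (norm := abel) -hc)), zero_mul]
        · intro hs; exact absurd (mem_univ r) hs
      rw [Finset.sum_congr rfl fun r _ => inner r, ← Finset.mul_sum]
      have hk0 : (k : ℂ) ≠ 0 := Nat.cast_ne_zero.mpr (NeZero.ne k)
      rw [← mul_assoc, one_div, inv_mul_cancel₀ hk0, one_mul]
      exact Finset.sum_congr rfl fun r _ => by rw [hκd r, hκd (r + j)]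
    rw [eT1, eT2, hAc j] at h1
    have h2 : ((A j : ℝ) : ℂ) = (((∑ s : ZMod k, A (j - s) * A s) + ∑ r : ZMod k, d r * d (r + j) : ℝ) : ℂ) := by
      rw [h1]; push_cast; ring
    exact_mod_cast h2
  -- equation (B')
  have hB' : ∀ r : ZMod k, d r = ∑ jj : ZMod k, A jj * (d (r + jj) + d (r - jj)) := by
    intro r
    have h1 := hBeq r r
    have h2 : ∀ i jj : ZMod k, etac k (i * (r - r)) * α i jj * (κ (r + jj) (r + jj) + κ (r - jj) (r - jj))
        = α i jj * (((d (r + jj) : ℝ) : ℂ) + ((d (r - jj) : ℝ) : ℂ)) := by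
      intro i jj
      rw [sub_self, mul_zero, etac_zero, one_mul, hκd, hκd]
    rw [Finset.sum_congr rfl fun i _ => Finset.sum_congr rfl fun jj _ => h2 i jj] at h1
    rw [Finset.sum_comm] at h1
    have h3 : (∑ jj : ZMod k, ∑ i : ZMod k, α i jj * (((d (r + jj) : ℝ) : ℂ) + ((d (r - jj) : ℝ) : ℂ)))
        = ∑ jj : ZMod k, ((A jj : ℝ) : ℂ) * (((d (r + jj) : ℝ) : ℂ) + ((d (r - jj) : ℝ) : ℂ)) := by
      refine Finset.sum_congr rfl fun jj _ => ?_
      rw [← Finset.sum_mul, hAc jj]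
    rw [h3, hκd r] at h1
    have h4 : ((d r : ℝ) : ℂ) = ((∑ jj : ZMod k, A jj * (d (r + jj) + d (r - jj)) : ℝ) : ℂ) := by
      rw [h1]; push_cast; ring
    exact_mod_cast h4
  -- support facts
  have hApos : ∀ jj : ZMod k, A jj ≠ 0 → 0 < A jj := fun jj h => lt_of_le_of_ne (hA0 jj) (Ne.symm h)
  have hAexists : ∀ jj : ZMod k, A jj ≠ 0 → ∃ i, α i jj ≠ 0 := by
    intro jj hjj
    by_contra hc; push_neg at hc
    exact hjj (Finset.sum_eq_zero fun i _ => by rw [hc i]; simp)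
  have hexistsA : ∀ jj : ZMod k, (∃ i, α i jj ≠ 0) → A jj ≠ 0 := by
    rintro jj ⟨i, hi⟩
    have hrei : (α i jj).re ≠ 0 := fun hc => hi (by rw [hαre i jj, hc]; simp)
    have h1 : 0 < (α i jj).re := lt_of_le_of_ne (hre i jj) (Ne.symm hrei)
    have hle : (α i jj).re ≤ A jj :=
      Finset.single_le_sum (fun i' (_ : i' ∈ univ) => hre i' jj) (Finset.mem_univ i)
    linarith
  -- q is well defined
  have hSne : {j : ℕ | 1 ≤ j ∧ j ≤ k ∧ ∃ i : ZMod k, α i (j : ZMod k) ≠ 0}.Nonempty := by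
    have hex : ∃ j0 : ZMod k, ∃ i, α i j0 ≠ 0 := by
      by_contra hc; push_neg at hc
      rw [Finset.sum_comm] at hα
      rw [Finset.sum_eq_zero fun j _ => Finset.sum_eq_zero fun i _ => hc j i] at hα
      norm_num at hα
    obtain ⟨j0, i0, hi0⟩ := hex
    by_cases hj0 : j0 = 0
    · exact ⟨k, by omega, le_refl k, i0, by rwa [ZMod.natCast_self, ← hj0]⟩
    · refine ⟨j0.val, ?_, le_of_lt j0.val_lt, i0, ?_⟩
      · exact Nat.one_le_iff_ne_zero.mpr (fun hc => hj0 (ZMod.val_eq_zero j0 |>.mp hc))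
      · rw [ZMod.natCast_val, ZMod.cast_id]; exact hi0
  have hqmem : q ∈ {j : ℕ | 1 ≤ j ∧ j ≤ k ∧ ∃ i : ZMod k, α i (j : ZMod k) ≠ 0} :=
    hq ▸ Nat.sInf_mem hSne
  obtain ⟨hq1, hqlek, hqex⟩ := hqmem
  have hqmin : ∀ m : ℕ, 1 ≤ m → m ≤ k → (∃ i : ZMod k, α i (m : ZMod k) ≠ 0) → q ≤ m := by
    intro m h1 h2 h3; rw [hq]; exact Nat.sInf_le ⟨h1, h2, h3⟩
  have hAq : A (q : ZMod k) ≠ 0 := hexistsA _ hqex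
  -- closure properties of the support
  have hadd : ∀ x y : ZMod k, A x ≠ 0 → A y ≠ 0 → A (x + y) ≠ 0 := by
    intro x y hx hy
    have h1 := hA' (x + y)
    have hterm : A x * A y ≤ ∑ s : ZMod k, A (x + y - s) * A s := by
      have h2 := Finset.single_le_sum (f := fun s : ZMod k => A (x + y - s) * A s)
        (fun s _ => mul_nonneg (hA0 _) (hA0 _)) (Finset.mem_univ y)
      have h3 : x + y - y = x := by ring
      simp only [h3] at h2
      exact h2
    have hsum2 : 0 ≤ ∑ r : ZMod k, d r * d (r + (x + y)) :=
      Finset.sum_nonneg fun r _ => mul_nonneg (hd0 _) (hd0 _)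
    have hpos2 := mul_pos (hApos x hx) (hApos y hy)
    intro hc
    rw [hc] at h1
    linarith
  have hTT : ∀ u v : ZMod k, d u ≠ 0 → d v ≠ 0 → A (v - u) ≠ 0 := by
    intro u v hu hv
    have h1 := hA' (v - u)
    have hterm : d u * d v ≤ ∑ r : ZMod k, d r * d (r + (v - u)) := by
      have h2 := Finset.single_le_sum (f := fun r : ZMod k => d r * d (r + (v - u)))
        (fun r _ => mul_nonneg (hd0 _) (hd0 _)) (Finset.mem_univ u)
      have h3 : u + (v - u) = v := by ring
      simp only [h3] at h2
      exact h2
    have hsum1 : 0 ≤ ∑ s : ZMod k, A (v - u - s) * A s :=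
      Finset.sum_nonneg fun s _ => mul_nonneg (hA0 _) (hA0 _)
    have hdu : 0 < d u := lt_of_le_of_ne (hd0 u) (Ne.symm hu)
    have hdv : 0 < d v := lt_of_le_of_ne (hd0 v) (Ne.symm hv)
    intro hc; rw [hc] at h1; nlinarith
  obtain ⟨u0, hu0⟩ : ∃ u, d u ≠ 0 := by
    by_contra hc; push_neg at hc
    rw [Finset.sum_eq_zero fun r _ => hc r] at hdsum; norm_num at hdsum
  have hA0ne : A 0 ≠ 0 := by
    have := hTT u0 u0 hu0 hu0; simpa using this
  have hmulA : ∀ (m : ℕ) (x : ZMod k), A x ≠ 0 → A (m • x) ≠ 0 := by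
    intro m
    induction m with
    | zero => intro x _; simpa using hA0ne
    | succ n ih =>
      intro x hx
      have e : (n + 1) • x = n • x + x := succ_nsmul x n
      rw [e]
      exact hadd _ _ (ih x hx) hx
  have hnegA : ∀ x : ZMod k, A x ≠ 0 → A (-x) ≠ 0 := by
    intro x hx
    have h1 := hmulA (k - 1) x hx
    have h2 : ((k - 1 : ℕ) : ZMod k) = -1 := by
      rw [Nat.cast_sub (by omega : 1 ≤ k), ZMod.natCast_self]
      ring
    have h3 : (k - 1 : ℕ) • x = -x := by
      rw [nsmul_eq_mul, h2]; ring
    rwa [h3] at h1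
  -- divisibility of supports by q
  have hdvd : ∀ x : ZMod k, A x ≠ 0 → q ∣ x.val := by
    intro x hx
    by_contra hnd
    set m := x.val / q with hm
    set ρ := x.val % q with hρ
    have hρq : ρ < q := Nat.mod_lt _ hq1
    have hρ0 : ρ ≠ 0 := fun hc => hnd (Nat.dvd_of_mod_eq_zero hc)
    have hAmq : A (m • (-(q : ZMod k))) ≠ 0 := hmulA m _ (hnegA _ hAq)
    have hAsumx : A (x + m • (-(q : ZMod k))) ≠ 0 := hadd _ _ hx hAmq
    have hxρ : x + m • (-(q : ZMod k)) = ((ρ : ℕ) : ZMod k) := by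
      have hxv : ((x.val : ℕ) : ZMod k) = x := by
        rw [ZMod.natCast_val, ZMod.cast_id]
      have hsplit : x.val = q * m + ρ := (Nat.div_add_mod x.val q).symm
      rw [nsmul_eq_mul, ← hxv, hsplit]
      push_cast
      ring
    rw [hxρ] at hAsumx
    have : q ≤ ρ := hqmin ρ (Nat.one_le_iff_ne_zero.mpr hρ0)
      (le_trans (le_of_lt hρq) hqlek) (hAexists _ hAsumx)
    omega
  have hqdvdk : q ∣ k := by
    by_cases hqc : (q : ZMod k) = 0
    · have hkq : k ∣ q := (ZMod.natCast_eq_zero_iff q k).mp hqc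
      have h1 : k ≤ q := Nat.le_of_dvd (by omega) hkq
      have h2 : q = k := le_antisymm hqlek h1
      rw [h2]
    · have h1 := hdvd (-(q : ZMod k)) (hnegA _ hAq)
      rw [ZMod.neg_val, if_neg hqc] at h1
      have hqval : (q : ZMod k).val = q := by
        apply ZMod.val_cast_of_lt
        rcases lt_or_eq_of_le hqlek with hlt | heq
        · exact hlt
        · exact absurd (by rw [heq]; exact ZMod.natCast_self k) hqc
      rw [hqval] at h1
      have h2 : (k - q) + q = k := Nat.sub_add_cancel hqlek
      exact h2 ▸ Nat.dvd_add h1 dvd_rfl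
  have hInQ : ∀ x : ZMod k, InQ k q x ↔ q ∣ x.val := by
    intro x
    constructor
    · rintro ⟨t, rfl⟩
      rw [ZMod.val_mul, Nat.dvd_mod_iff hqdvdk]
      refine Dvd.dvd.mul_right ?_ _
      rw [ZMod.val_natCast]
      exact (Nat.dvd_mod_iff hqdvdk).mpr dvd_rfl
    · rintro ⟨m, hm⟩
      refine ⟨(m : ZMod k), ?_⟩
      have hxv : ((x.val : ℕ) : ZMod k) = x := by rw [ZMod.natCast_val, ZMod.cast_id]
      rw [← hxv, hm]
      push_cast; ring
  -- the maximum principle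
  obtain ⟨r0, -, hr0max⟩ := Finset.exists_max_image (univ : Finset (ZMod k)) d ⟨0, Finset.mem_univ 0⟩
  set M := d r0 with hM
  have hMmax : ∀ r, d r ≤ M := fun r => hr0max r (Finset.mem_univ r)
  have hMpos : 0 < M := lt_of_lt_of_le (lt_of_le_of_ne (hd0 u0) (Ne.symm hu0)) (hMmax u0)
  have hstep : ∀ r : ZMod k, d r = M → d (r + (q : ZMod k)) = M := by
    intro r hr
    have h1 := hB' r
    have h2 : ∑ jj : ZMod k, A jj * (2 * M) = M := by
      rw [← Finset.sum_mul, hAsum]; ring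
    have h3 : ∑ jj : ZMod k, A jj * (2 * M - (d (r + jj) + d (r - jj))) = 0 := by
      have e : ∀ jj : ZMod k, A jj * (2 * M - (d (r + jj) + d (r - jj)))
          = A jj * (2 * M) - A jj * (d (r + jj) + d (r - jj)) := fun jj => by ring
      rw [Finset.sum_congr rfl fun jj _ => e jj, Finset.sum_sub_distrib, h2, ← h1, hr]
      ring
    have hnn : ∀ jj : ZMod k, jj ∈ univ → 0 ≤ A jj * (2 * M - (d (r + jj) + d (r - jj))) := by
      intro jj _
      have g1 := hMmax (r + jj); have g2 := hMmax (r - jj)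
      exact mul_nonneg (hA0 jj) (by linarith)
    have h4 := (Finset.sum_eq_zero_iff_of_nonneg hnn).mp h3 (q : ZMod k) (Finset.mem_univ _)
    rcases mul_eq_zero.mp h4 with h5 | h5
    · exact absurd h5 hAq
    · have g1 := hMmax (r + (q : ZMod k)); have g2 := hMmax (r - (q : ZMod k))
      linarith
  have hcoset : ∀ n : ℕ, d (r0 + n • (q : ZMod k)) = M := by
    intro n
    induction n with
    | zero => simp only [zero_smul, add_zero]; exact hM.symm
    | succ n ih =>
      have e : r0 + (n + 1) • (q : ZMod k) = (r0 + n • (q : ZMod k)) + (q : ZMod k) := by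
        rw [succ_nsmul]; ring
      rw [e]
      exact hstep _ ih
  have hcoset' : ∀ t : ZMod k, d (r0 + (q : ZMod k) * t) = M := by
    intro t
    have e : (q : ZMod k) * t = t.val • (q : ZMod k) := by
      rw [nsmul_eq_mul, ZMod.natCast_val, ZMod.cast_id]; ring
    rw [e]; exact hcoset t.val
  set l := r0.val % q with hl
  have hlq : l < q := Nat.mod_lt _ hq1
  have hr0l : InQ k q (r0 - (l : ZMod k)) := by
    obtain ⟨m0, hm0⟩ : ∃ m0, m0 = r0.val / q := ⟨_, rfl⟩
    refine ⟨((m0 : ℕ) : ZMod k), ?_⟩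
    have hxv : ((r0.val : ℕ) : ZMod k) = r0 := by rw [ZMod.natCast_val, ZMod.cast_id]
    have hsplit : r0.val = q * m0 + l := by rw [hm0]; exact (Nat.div_add_mod r0.val q).symm
    have key : ((q * m0 + l : ℕ) : ZMod k) = r0 := by rw [← hsplit]; exact hxv
    rw [← key]; push_cast; ring
  obtain ⟨t0, ht0⟩ := hr0l
  have hdiagM : ∀ r : ZMod k, InQ k q (r - (l : ZMod k)) → d r = M := by
    rintro r ⟨t1, ht1⟩
    have e : r = r0 + (q : ZMod k) * (t1 - t0) := by linear_combination ht1 - ht0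
    rw [e]; exact hcoset' _
  have hdiag0 : ∀ r : ZMod k, ¬ InQ k q (r - (l : ZMod k)) → d r = 0 := by
    intro r hr
    by_contra hdr
    have hdr0 : d r0 ≠ 0 := by rw [← hM]; exact ne_of_gt hMpos
    have h1 : A (r - r0) ≠ 0 := hTT r0 r hdr0 hdr
    obtain ⟨t2, ht2⟩ := (hInQ _).mpr (hdvd _ h1)
    exact hr ⟨t2 + t0, by linear_combination ht2 + ht0⟩
  -- counting the coset
  have hq0 : 0 < q := hq1
  have hcard : (Finset.univ.filter (fun x : ZMod k => q ∣ x.val)).card = k / q := by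
    rw [← Finset.card_range (k / q)]
    apply Finset.card_nbij' (i := fun x : ZMod k => x.val / q) (j := fun n : ℕ => ((q * n : ℕ) : ZMod k))
    · intro x hx
      rw [Finset.mem_coe, Finset.mem_filter] at hx
      obtain ⟨m, hm⟩ := hx.2
      have hlt : x.val < k := x.val_lt
      beta_reduce
      rw [Finset.mem_coe, Finset.mem_range, hm, Nat.mul_div_cancel_left m hq0]
      have hkqq : q * (k / q) = k := Nat.mul_div_cancel' hqdvdk
      by_contra hcon
      push_neg at hcon
      have : k ≤ q * m := by calc k = q * (k/q) := hkqq.symm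
                                  _ ≤ q * m := Nat.mul_le_mul_left q hcon
      omega
    · intro n hn
      rw [Finset.mem_coe, Finset.mem_range] at hn
      have hlt : q * n < k := by
        have hkqq : q * (k / q) = k := Nat.mul_div_cancel' hqdvdk
        calc q * n < q * (k / q) := (Nat.mul_lt_mul_left hq0).mpr hn
          _ = k := hkqq
      rw [Finset.mem_coe, Finset.mem_filter]
      refine ⟨Finset.mem_univ _, ?_⟩
      rw [ZMod.val_cast_of_lt hlt]
      exact Dvd.intro n rfl
    · intro x hx
      rw [Finset.mem_coe, Finset.mem_filter] at hx
      obtain ⟨m, hm⟩ := hx.2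
      beta_reduce
      rw [Nat.mul_div_cancel' hx.2, ZMod.natCast_val, ZMod.cast_id]
    · intro n hn
      rw [Finset.mem_coe, Finset.mem_range] at hn
      have hlt : q * n < k := by
        have hkqq : q * (k / q) = k := Nat.mul_div_cancel' hqdvdk
        calc q * n < q * (k / q) := (Nat.mul_lt_mul_left hq0).mpr hn
          _ = k := hkqq
      beta_reduce
      rw [ZMod.val_cast_of_lt hlt, Nat.mul_div_cancel_left n hq0]
  -- summing d over the coset
  have hsum_shift : ∑ x : ZMod k, d (x + (l : ZMod k)) = 1 / 2 := by
    rw [← hdsum]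
    exact Fintype.sum_equiv (Equiv.addRight (l : ZMod k)) _ _ (fun x => rfl)
  have hdx : ∀ x : ZMod k, d (x + (l : ZMod k)) = if q ∣ x.val then M else 0 := by
    intro x
    have hsub : (x + (l : ZMod k)) - (l : ZMod k) = x := by ring
    by_cases hx : q ∣ x.val
    · rw [if_pos hx]
      exact hdiagM _ (by rw [hsub]; exact (hInQ x).mpr hx)
    · rw [if_neg hx]
      refine hdiag0 _ ?_
      rw [hsub]
      exact fun hc => hx ((hInQ x).mp hc)
  have hMeq : ((k / q : ℕ) : ℝ) * M = 1 / 2 := by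
    rw [← hsum_shift, Finset.sum_congr rfl fun x _ => hdx x, Finset.sum_ite,
      Finset.sum_const_zero, add_zero, Finset.sum_const, hcard, nsmul_eq_mul]
  have hk0R : (k : ℝ) ≠ 0 := Nat.cast_ne_zero.mpr (NeZero.ne k)
  have hq0R : (q : ℝ) ≠ 0 := Nat.cast_ne_zero.mpr (by omega)
  have hkq : ((k / q : ℕ) : ℝ) = (k : ℝ) / q := Nat.cast_div hqdvdk hq0R
  have hMval : M = (q : ℝ) / (2 * k) := by
    rw [hkq] at hMeq
    field_simp at hMeq ⊢
    linarith
  -- conclusion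
  refine ⟨hqdvdk, l, hlq, ?_, ?_⟩
  · intro r
    constructor
    · intro hr
      rw [hκd r, hdiagM r hr, hMval]
      push_cast
      ring
    · intro hr
      rw [hκd r, hdiag0 r hr]
      simp
  · intro r s hrs
    rcases hrs with hr | hs
    · exact (hκzero r (hdiag0 r hr) s).1
    · exact (hκzero s (hdiag0 s hs) r).2
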